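/- Let μ ∈ ℝ, σ > 0 and ρ > 0, and let q(x) = 2 φ_{μ,σ²}(x) Φ((x - μ)/√(σ² + ρ²)). Then the second moment of the distribution with density q is ∫_{-∞}^{+∞} x² q(x) dx = μ² + 4μσ²/√(2π(2σ² + ρ²)) + σ². -/

import Mathlib

open MeasureTheory Real Filter

/-- The density of the standard normal distribution. -/
noncomputable def stdGaussianPDF (x : ℝ) : ℝ :=
  (Real.sqrt (2 * Real.pi))⁻¹ * Real.exp (-x ^ 2 / 2)

/-- The cumulative distribution function of the standard normal distribution. -/
noncomputable def stdGaussianCDF (x : ℝ) : ℝ :=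
  ∫ t in Set.Iic x, stdGaussianPDF t

/-- The density of the normal distribution with mean `μ` and variance `σ²`. -/
noncomputable def normalPDF (μ σ : ℝ) (x : ℝ) : ℝ :=
  (σ * Real.sqrt (2 * Real.pi))⁻¹ * Real.exp (-(x - μ) ^ 2 / (2 * σ ^ 2))

lemma phi_fun_eq : stdGaussianPDF
    = fun x => (Real.sqrt (2 * Real.pi))⁻¹ * Real.exp (-(1/2 : ℝ) * x ^ 2) := by
  funext x; unfold stdGaussianPDF; ring_nf

lemma phi_cont : Continuous stdGaussianPDF := by
  unfold stdGaussianPDF; fun_prop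

lemma phi_nonneg (x : ℝ) : 0 ≤ stdGaussianPDF x := by
  unfold stdGaussianPDF; positivity

lemma phi_neg (x : ℝ) : stdGaussianPDF (-x) = stdGaussianPDF x := by
  unfold stdGaussianPDF; rw [neg_pow]; ring_nf

lemma integrable_phi : Integrable stdGaussianPDF := by
  rw [phi_fun_eq]
  exact (integrable_exp_neg_mul_sq (by norm_num : (0:ℝ) < 1/2)).const_mul _

lemma integral_phi : ∫ x, stdGaussianPDF x = 1 := by
  rw [phi_fun_eq]
  rw [integral_const_mul, integral_gaussian]
  rw [show π / (1/2) = 2 * π by ring, inv_mul_cancel₀]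
  positivity

lemma integrable_mul_phi : Integrable (fun x => x * stdGaussianPDF x) := by
  rw [phi_fun_eq]
  exact ((integrable_mul_exp_neg_mul_sq (by norm_num : (0:ℝ) < 1/2)).const_mul
    ((Real.sqrt (2*π))⁻¹)).congr (Filter.Eventually.of_forall fun x => by ring)

lemma integrable_sq_mul_phi : Integrable (fun x => x ^ 2 * stdGaussianPDF x) := by
  rw [phi_fun_eq]
  have h := (integrable_rpow_mul_exp_neg_mul_sq (by norm_num : (0:ℝ) < 1/2)
    (by norm_num : (-1:ℝ) < 2)).const_mul ((Real.sqrt (2*π))⁻¹)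
  refine h.congr (Filter.Eventually.of_forall fun x => ?_)
  dsimp only; rw [Real.rpow_two]; ring

lemma cdf_eq (x : ℝ) : stdGaussianCDF x
    = stdGaussianCDF 0 + ∫ t in (0:ℝ)..x, stdGaussianPDF t := by
  unfold stdGaussianCDF
  rw [← intervalIntegral.integral_Iic_sub_Iic integrable_phi.integrableOn
    integrable_phi.integrableOn]
  ring

lemma cdf_hasDerivAt (x : ℝ) : HasDerivAt stdGaussianCDF (stdGaussianPDF x) x := by
  have : stdGaussianCDF = fun y => stdGaussianCDF 0 + ∫ t in (0:ℝ)..y, stdGaussianPDF t :=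
    funext cdf_eq
  rw [this]
  exact ((intervalIntegral.integral_hasDerivAt_right
    integrable_phi.intervalIntegrable
    (phi_cont.stronglyMeasurableAtFilter _ _) phi_cont.continuousAt).const_add _)

lemma cdf_nonneg (x : ℝ) : 0 ≤ stdGaussianCDF x :=
  setIntegral_nonneg measurableSet_Iic fun t _ => phi_nonneg t

lemma cdf_le_one (x : ℝ) : stdGaussianCDF x ≤ 1 := by
  rw [← integral_phi]
  exact setIntegral_le_integral integrable_phi (Filter.Eventually.of_forall phi_nonneg)

lemma cdf_neg (x : ℝ) : stdGaussianCDF (-x) = 1 - stdGaussianCDF x := by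
  have h1 : ∫ t in Set.Ioi (-x), stdGaussianPDF t = stdGaussianCDF x := by
    rw [← integral_comp_neg_Iic x stdGaussianPDF]
    unfold stdGaussianCDF
    exact setIntegral_congr_fun measurableSet_Iic fun t _ => phi_neg t
  have h2 := intervalIntegral.integral_Iic_add_Ioi (b := -x) (μ := volume)
    (f := stdGaussianPDF) integrable_phi.integrableOn integrable_phi.integrableOn
  rw [integral_phi] at h2
  unfold stdGaussianCDF at *
  linarith [h1, h2]

lemma cdf_tendsto_atBot : Tendsto stdGaussianCDF atBot (nhds 0) := by
  have h := intervalIntegral_tendsto_integral_Iic (0:ℝ) (μ := volume) (f := stdGaussianPDF)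
    integrable_phi.integrableOn (tendsto_id (α := ℝ) (x := atBot))
  have h2 : Tendsto (fun x : ℝ => stdGaussianCDF 0 - ∫ t in x..(0:ℝ), stdGaussianPDF t)
      atBot (nhds (stdGaussianCDF 0 - stdGaussianCDF 0)) := tendsto_const_nhds.sub h
  rw [sub_self] at h2
  refine h2.congr fun x => ?_
  rw [cdf_eq x, intervalIntegral.integral_symm]; ring

lemma cdf_tendsto_atTop : Tendsto stdGaussianCDF atTop (nhds 1) := by
  have h : Tendsto (fun x : ℝ => 1 - stdGaussianCDF (-x)) atTop (nhds (1 - 0)) :=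
    tendsto_const_nhds.sub (cdf_tendsto_atBot.comp tendsto_neg_atTop_atBot)
  rw [sub_zero] at h
  refine h.congr fun x => ?_
  rw [cdf_neg]; ring

lemma phi_hasDerivAt (x : ℝ) : HasDerivAt stdGaussianPDF (-x * stdGaussianPDF x) x := by
  unfold stdGaussianPDF
  have h1 : HasDerivAt (fun u : ℝ => -u ^ 2 / 2) (-x) x := by
    have := ((hasDerivAt_pow 2 x).neg.div_const 2)
    refine this.congr_deriv ?_; push_cast; ring
  have h2 := (h1.exp).const_mul ((Real.sqrt (2*π))⁻¹)
  refine h2.congr_deriv ?_; ring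

lemma tendsto_mul_phi_cocompact :
    Tendsto (fun x => x * stdGaussianPDF x) (cocompact ℝ) (nhds 0) := by
  rw [tendsto_zero_iff_norm_tendsto_zero]
  have h := (tendsto_rpow_abs_mul_exp_neg_mul_sq_cocompact
    (by norm_num : (0:ℝ) < 1/2) 1).const_mul ((Real.sqrt (2*π))⁻¹)
  rw [mul_zero] at h
  refine h.congr fun x => ?_
  rw [Real.rpow_one]
  unfold stdGaussianPDF
  rw [Real.norm_eq_abs, abs_mul, abs_mul,
    abs_of_nonneg (show (0:ℝ) ≤ (Real.sqrt (2*π))⁻¹ by positivity),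
    abs_of_nonneg (Real.exp_nonneg _), show -x^2/2 = -(1/2)*x^2 by ring]
  ring

lemma tendsto_mul_phi_atTop : Tendsto (fun x => x * stdGaussianPDF x) atTop (nhds 0) :=
  tendsto_mul_phi_cocompact.mono_left (by rw [cocompact_eq_atBot_atTop]; exact le_sup_right)

lemma tendsto_mul_phi_atBot : Tendsto (fun x => x * stdGaussianPDF x) atBot (nhds 0) :=
  tendsto_mul_phi_cocompact.mono_left (by rw [cocompact_eq_atBot_atTop]; exact le_sup_left)

lemma tendsto_phi_atTop : Tendsto stdGaussianPDF atTop (nhds 0) := by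
  rw [phi_fun_eq]
  have h := (tendsto_exp_atBot.comp
    (tendsto_id.const_mul_atTop_of_neg (show (-(1/2) : ℝ) < 0 by norm_num))).comp
    (tendsto_pow_atTop (n := 2) two_ne_zero)
  have := h.const_mul ((Real.sqrt (2*π))⁻¹)
  rw [mul_zero] at this
  exact this.congr fun x => by simp [Function.comp]

lemma tendsto_phi_atBot : Tendsto stdGaussianPDF atBot (nhds 0) := by
  have := tendsto_phi_atTop.comp tendsto_neg_atBot_atTop
  exact this.congr fun x => by simp [Function.comp, phi_neg]

lemma integral_sq_mul_phi : ∫ x, x ^ 2 * stdGaussianPDF x = 1 := by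
  have hderiv : ∀ x : ℝ, HasDerivAt (fun u => stdGaussianCDF u - u * stdGaussianPDF u)
      (x ^ 2 * stdGaussianPDF x) x := by
    intro x
    have h := (cdf_hasDerivAt x).sub ((hasDerivAt_id x).mul (phi_hasDerivAt x))
    refine h.congr_deriv ?_
    simp only [id_eq, one_mul]
    ring
  have hbot : Tendsto (fun u => stdGaussianCDF u - u * stdGaussianPDF u) atBot (nhds 0) := by
    have := cdf_tendsto_atBot.sub tendsto_mul_phi_atBot
    rwa [sub_zero] at this
  have htop : Tendsto (fun u => stdGaussianCDF u - u * stdGaussianPDF u) atTop (nhds 1) := by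
    have := cdf_tendsto_atTop.sub tendsto_mul_phi_atTop
    rwa [sub_zero] at this
  have := integral_of_hasDerivAt_of_tendsto hderiv integrable_sq_mul_phi hbot htop
  rw [this]; norm_num

lemma cdf_cont : Continuous stdGaussianCDF :=
  continuous_iff_continuousAt.2 fun x => (cdf_hasDerivAt x).continuousAt

lemma cdf_abs_le_one (x : ℝ) : |stdGaussianCDF x| ≤ 1 :=
  abs_le.2 ⟨by linarith [cdf_nonneg x], cdf_le_one x⟩

lemma integrable_mul_cdf {g : ℝ → ℝ} (hg : Integrable g) (hgc : Continuous g) (c : ℝ) :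
    Integrable (fun u => g u * stdGaussianCDF (c * u)) := by
  refine hg.mono ((hgc.mul (cdf_cont.comp (continuous_const.mul continuous_id))).aestronglyMeasurable)
    (Filter.Eventually.of_forall fun u => ?_)
  rw [Real.norm_eq_abs, Real.norm_eq_abs, abs_mul]
  calc |g u| * |stdGaussianCDF (c * u)| ≤ |g u| * 1 :=
        mul_le_mul_of_nonneg_left (cdf_abs_le_one _) (abs_nonneg _)
    _ = |g u| := mul_one _

lemma L0 (c : ℝ) : ∫ u, stdGaussianPDF u * stdGaussianCDF (c * u) = 1/2 := by
  set I := ∫ u, stdGaussianPDF u * stdGaussianCDF (c * u) with hI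
  have hrefl : (∫ u : ℝ, stdGaussianPDF (-u) * stdGaussianCDF (c * -u)) = I := by
    simpa using integral_neg_eq_self
      (fun u => stdGaussianPDF u * stdGaussianCDF (c * u)) volume
  have heq : (∫ u : ℝ, stdGaussianPDF (-u) * stdGaussianCDF (c * -u))
      = ∫ u : ℝ, (stdGaussianPDF u - stdGaussianPDF u * stdGaussianCDF (c * u)) := by
    congr 1; funext u
    rw [phi_neg, show c * -u = -(c * u) by ring, cdf_neg]; ring
  rw [heq, integral_sub integrable_phi (integrable_mul_cdf integrable_phi phi_cont c),
    integral_phi, ← hI] at hrefl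
  linarith

lemma L2 (c : ℝ) : ∫ u, u ^ 2 * stdGaussianPDF u * stdGaussianCDF (c * u) = 1/2 := by
  have hint : Integrable (fun u => u ^ 2 * stdGaussianPDF u * stdGaussianCDF (c * u)) :=
    (integrable_mul_cdf integrable_sq_mul_phi (by rw [phi_fun_eq]; fun_prop) c).congr
      (Filter.Eventually.of_forall fun u => by ring)
  have hrefl := integral_neg_eq_self
    (fun u => u ^ 2 * stdGaussianPDF u * stdGaussianCDF (c * u)) volume
  have heq : (∫ x : ℝ, (fun u => u ^ 2 * stdGaussianPDF u * stdGaussianCDF (c * u)) (-x))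
      = ∫ u : ℝ, (u ^ 2 * stdGaussianPDF u
        - u ^ 2 * stdGaussianPDF u * stdGaussianCDF (c * u)) := by
    refine integral_congr_ae (Filter.Eventually.of_forall fun u => ?_)
    simp only
    rw [phi_neg, show c * -u = -(c * u) by ring, cdf_neg, neg_pow]; ring
  rw [heq, integral_sub integrable_sq_mul_phi hint, integral_sq_mul_phi] at hrefl
  linarith

lemma cdf_comp_hasDerivAt (c u : ℝ) :
    HasDerivAt (fun v : ℝ => stdGaussianCDF (c * v)) (c * stdGaussianPDF (c * u)) u := by
  have h := (cdf_hasDerivAt (c * u)).comp u ((hasDerivAt_id u).const_mul c)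
  exact h.congr_deriv (by simp [mul_comm])

lemma L1 (c : ℝ) : ∫ u, u * stdGaussianPDF u * stdGaussianCDF (c * u)
    = c / Real.sqrt (2 * π * (1 + c ^ 2)) := by
  set d := Real.sqrt (1 + c ^ 2) with hd_def
  have hd : 0 < d := Real.sqrt_pos.2 (by positivity)
  have hd2 : d ^ 2 = 1 + c ^ 2 := Real.sq_sqrt (by positivity)
  set K := c / Real.sqrt (2 * π * (1 + c ^ 2)) with hK_def
  have hsqrt : Real.sqrt (2 * π * (1 + c ^ 2)) = Real.sqrt (2 * π) * d := by
    rw [hd_def, ← Real.sqrt_mul (by positivity)]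
  have h2π : Real.sqrt (2 * π) ≠ 0 := by positivity
  have hKd : K * d = c * (Real.sqrt (2 * π))⁻¹ := by
    rw [hK_def, hsqrt, div_eq_mul_inv, mul_inv]
    field_simp
  have key : ∀ u : ℝ, K * (d * stdGaussianPDF (d * u))
      = c * stdGaussianPDF (c * u) * stdGaussianPDF u := by
    intro u
    unfold stdGaussianPDF
    have hexp : Real.exp (-(d * u) ^ 2 / 2)
        = Real.exp (-(c * u) ^ 2 / 2) * Real.exp (-u ^ 2 / 2) := by
      rw [← Real.exp_add]
      congr 1
      have h3 : (d * u) ^ 2 = d ^ 2 * u ^ 2 := by ring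
      rw [h3, hd2]; ring
    rw [hexp]
    linear_combination ((Real.sqrt (2 * π))⁻¹ * Real.exp (-(c * u) ^ 2 / 2)
      * Real.exp (-u ^ 2 / 2)) * hKd
  have hderiv : ∀ u : ℝ, HasDerivAt
      (fun u => -(stdGaussianPDF u * stdGaussianCDF (c * u)) + K * stdGaussianCDF (d * u))
      (u * stdGaussianPDF u * stdGaussianCDF (c * u)) u := by
    intro u
    have h1 := ((phi_hasDerivAt u).mul (cdf_comp_hasDerivAt c u)).neg
    have h2 := (cdf_comp_hasDerivAt d u).const_mul K
    have h := h1.add h2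
    refine h.congr_deriv ?_
    linear_combination key u
  have hbound : ∀ u : ℝ, ‖-(stdGaussianPDF u * stdGaussianCDF (c * u))‖ ≤ stdGaussianPDF u := by
    intro u
    rw [norm_neg, Real.norm_eq_abs, abs_mul, abs_of_nonneg (phi_nonneg u)]
    calc stdGaussianPDF u * |stdGaussianCDF (c * u)| ≤ stdGaussianPDF u * 1 :=
        mul_le_mul_of_nonneg_left (cdf_abs_le_one _) (phi_nonneg u)
      _ = stdGaussianPDF u := mul_one _
  have hbot : Tendsto (fun u => -(stdGaussianPDF u * stdGaussianCDF (c * u)) + K * stdGaussianCDF (d * u))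
      atBot (nhds 0) := by
    have t1 : Tendsto (fun u => -(stdGaussianPDF u * stdGaussianCDF (c * u))) atBot (nhds 0) :=
      squeeze_zero_norm hbound tendsto_phi_atBot
    have t2 : Tendsto (fun u => K * stdGaussianCDF (d * u)) atBot (nhds (K * 0)) :=
      (cdf_tendsto_atBot.comp (tendsto_id.const_mul_atBot hd)).const_mul K
    rw [mul_zero] at t2
    simpa using t1.add t2
  have htop : Tendsto (fun u => -(stdGaussianPDF u * stdGaussianCDF (c * u)) + K * stdGaussianCDF (d * u))
      atTop (nhds K) := by
    have t1 : Tendsto (fun u => -(stdGaussianPDF u * stdGaussianCDF (c * u))) atTop (nhds 0) :=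
      squeeze_zero_norm hbound tendsto_phi_atTop
    have t2 : Tendsto (fun u => K * stdGaussianCDF (d * u)) atTop (nhds (K * 1)) :=
      (cdf_tendsto_atTop.comp (tendsto_id.const_mul_atTop hd)).const_mul K
    rw [mul_one] at t2
    simpa using t1.add t2
  have hint : Integrable (fun u => u * stdGaussianPDF u * stdGaussianCDF (c * u)) :=
    (integrable_mul_cdf integrable_mul_phi (by rw [phi_fun_eq]; fun_prop) c).congr
      (Filter.Eventually.of_forall fun u => by ring)
  have hfin := integral_of_hasDerivAt_of_tendsto hderiv hint hbot htop
  rw [hfin]; ring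

/-- The second moment of the density `q(x) = 2 φ_{μ,σ²}(x) Φ((x-μ)/√(σ²+ρ²))` is
`μ² + 4μσ²/√(2π(2σ²+ρ²)) + σ²`. -/
theorem winner_density_second_moment (μ σ ρ : ℝ) (hσ : 0 < σ) (hρ : 0 < ρ) :
    ∫ x, x ^ 2 * (2 * normalPDF μ σ x
        * stdGaussianCDF ((x - μ) / Real.sqrt (σ ^ 2 + ρ ^ 2)))
      = μ ^ 2 + 4 * μ * σ ^ 2 / Real.sqrt (2 * Real.pi * (2 * σ ^ 2 + ρ ^ 2))
        + σ ^ 2 := by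
  have hπ := Real.pi_pos
  have hσ' : σ ≠ 0 := ne_of_gt hσ
  set s := Real.sqrt (σ ^ 2 + ρ ^ 2) with hs_def
  have hs : 0 < s := Real.sqrt_pos.2 (by positivity)
  have hs2 : s ^ 2 = σ ^ 2 + ρ ^ 2 := Real.sq_sqrt (by positivity)
  set c := σ / s with hc_def
  set F : ℝ → ℝ := fun x => x ^ 2 * (2 * normalPDF μ σ x
    * stdGaussianCDF ((x - μ) / s)) with hF_def
  have e1 : (∫ u : ℝ, F (σ * u + μ)) = |σ⁻¹| • (∫ y : ℝ, F (y + μ)) :=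
    Measure.integral_comp_mul_left (fun y => F (y + μ)) σ
  have e2 : (∫ y : ℝ, F (y + μ)) = ∫ x, F x := integral_add_right_eq_self F μ
  have e3 : ∫ x, F x = σ * ∫ u, F (σ * u + μ) := by
    rw [e1, e2, smul_eq_mul, abs_of_pos (by positivity : (0:ℝ) < σ⁻¹), ← mul_assoc,
      mul_inv_cancel₀ hσ', one_mul]
  have hF : ∀ u : ℝ, F (σ * u + μ)
      = σ⁻¹ * ((μ + σ * u) ^ 2 * (2 * (stdGaussianPDF u * stdGaussianCDF (c * u)))) := by
    intro u
    rw [hF_def]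
    simp only
    unfold normalPDF stdGaussianPDF
    rw [show σ * u + μ - μ = σ * u by ring]
    rw [show -(σ * u) ^ 2 / (2 * σ ^ 2) = -u ^ 2 / 2 by field_simp]
    rw [show σ * u / s = c * u by rw [hc_def]; ring]
    rw [mul_inv]
    ring
  have e4 : (∫ u : ℝ, F (σ * u + μ))
      = σ⁻¹ * ∫ u, (μ + σ * u) ^ 2 * (2 * (stdGaussianPDF u * stdGaussianCDF (c * u))) := by
    rw [← integral_const_mul]
    exact integral_congr_ae (Filter.Eventually.of_forall hF)
  rw [e3, e4, ← mul_assoc, mul_inv_cancel₀ hσ', one_mul]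
  have hintA := integrable_mul_cdf integrable_phi phi_cont c
  have hintB : Integrable (fun u => u * stdGaussianPDF u * stdGaussianCDF (c * u)) :=
    (integrable_mul_cdf integrable_mul_phi (by rw [phi_fun_eq]; fun_prop) c).congr
      (Filter.Eventually.of_forall fun u => by ring)
  have hintC : Integrable (fun u => u ^ 2 * stdGaussianPDF u * stdGaussianCDF (c * u)) :=
    (integrable_mul_cdf integrable_sq_mul_phi (by rw [phi_fun_eq]; fun_prop) c).congr
      (Filter.Eventually.of_forall fun u => by ring)
  have hsplit : (∫ u, (μ + σ * u) ^ 2 * (2 * (stdGaussianPDF u * stdGaussianCDF (c * u))))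
      = 2 * μ ^ 2 * (∫ u, stdGaussianPDF u * stdGaussianCDF (c * u))
        + 4 * μ * σ * (∫ u, u * stdGaussianPDF u * stdGaussianCDF (c * u))
        + 2 * σ ^ 2 * (∫ u, u ^ 2 * stdGaussianPDF u * stdGaussianCDF (c * u)) := by
    have h1 : (fun u : ℝ => (μ + σ * u) ^ 2 * (2 * (stdGaussianPDF u * stdGaussianCDF (c * u))))
        = fun u => (2 * μ ^ 2 * (stdGaussianPDF u * stdGaussianCDF (c * u))
            + 4 * μ * σ * (u * stdGaussianPDF u * stdGaussianCDF (c * u)))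
          + 2 * σ ^ 2 * (u ^ 2 * stdGaussianPDF u * stdGaussianCDF (c * u)) :=
      funext fun u => by ring
    have hA : Integrable (fun u => 2 * μ ^ 2 * (stdGaussianPDF u * stdGaussianCDF (c * u))) :=
      hintA.const_mul _
    have hB : Integrable (fun u => 4 * μ * σ * (u * stdGaussianPDF u * stdGaussianCDF (c * u))) :=
      hintB.const_mul _
    have hC : Integrable (fun u =>
        2 * σ ^ 2 * (u ^ 2 * stdGaussianPDF u * stdGaussianCDF (c * u))) := hintC.const_mul _
    have hAB : Integrable (fun u => 2 * μ ^ 2 * (stdGaussianPDF u * stdGaussianCDF (c * u))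
        + 4 * μ * σ * (u * stdGaussianPDF u * stdGaussianCDF (c * u))) := hA.add hB
    rw [h1, integral_add hAB hC, integral_add hA hB,
      integral_const_mul, integral_const_mul, integral_const_mul]
  rw [hsplit, L0 c, L1 c, L2 c]
  have hc2 : 1 + c ^ 2 = (2 * σ ^ 2 + ρ ^ 2) / s ^ 2 := by
    rw [hc_def, div_pow, eq_div_iff (by positivity : s ^ 2 ≠ 0)]
    field_simp
    linarith [hs2]
  have hkey : c / Real.sqrt (2 * π * (1 + c ^ 2))
      = σ / Real.sqrt (2 * π * (2 * σ ^ 2 + ρ ^ 2)) := by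
    rw [hc2, show 2 * π * ((2 * σ ^ 2 + ρ ^ 2) / s ^ 2)
      = (2 * π * (2 * σ ^ 2 + ρ ^ 2)) * (s⁻¹) ^ 2 by field_simp,
      Real.sqrt_mul (by positivity), Real.sqrt_sq (by positivity : (0:ℝ) ≤ s⁻¹), hc_def]
    have h1 : Real.sqrt (2 * π * (2 * σ ^ 2 + ρ ^ 2)) ≠ 0 := by positivity
    field_simp
  rw [hkey]
  ring
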